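/- Let S = K[x_1,...,x_n] with a fixed monomial order, and let J, E be ideals of S. If in(J+E) = in(J) + in(E), then in(J ∩ E) = in(J) ∩ in(E). -/

import Mathlib

open MvPolynomial

variable {K : Type*} [Field K] {n : ℕ}

/-- The leading monomial (exponent vector) of a polynomial with respect to a monomial
order `m`: the maximum of the support; by convention `lm m 0 = 0`. -/
noncomputable def lm (m : MonomialOrder (Fin n)) (f : MvPolynomial (Fin n) K) :
    Fin n →₀ ℕ :=
  m.toSyn.symm (f.support.sup fun d => m.toSyn d)

/-- The initial ideal of `I`: the ideal generated by the leading monomials of the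
nonzero elements of `I`. -/
noncomputable def initialIdeal (m : MonomialOrder (Fin n))
    (I : Ideal (MvPolynomial (Fin n) K)) : Ideal (MvPolynomial (Fin n) K) :=
  Ideal.span {p | ∃ f ∈ I, f ≠ 0 ∧ p = monomial (lm m f) (1 : K)}

/-- `G` is a Gröbner basis of `I`: a finite set of nonzero polynomials generating `I`
whose leading monomials generate the initial ideal of `I`. -/
def IsGroebnerBasis (m : MonomialOrder (Fin n)) (I : Ideal (MvPolynomial (Fin n) K))
    (G : Set (MvPolynomial (Fin n) K)) : Prop :=
  G.Finite ∧ (0 : MvPolynomial (Fin n) K) ∉ G ∧ Ideal.span G = I ∧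
    Ideal.span ((fun g => monomial (lm m g) (1 : K)) '' G) = initialIdeal m I

/-- The S-polynomial `S(f,g)` with respect to the monomial order `m`. -/
noncomputable def sPoly (m : MonomialOrder (Fin n)) (f g : MvPolynomial (Fin n) K) :
    MvPolynomial (Fin n) K :=
  monomial (lm m f ⊔ lm m g - lm m f) (f.coeff (lm m f))⁻¹ * f -
    monomial (lm m f ⊔ lm m g - lm m g) (g.coeff (lm m g))⁻¹ * g

/-- An ideal is a monomial ideal if it is generated by monomials. -/
def IsMonomialIdeal (I : Ideal (MvPolynomial (Fin n) K)) : Prop :=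
  ∃ M : Set (Fin n →₀ ℕ), I = Ideal.span ((fun μ => (monomial μ (1 : K))) '' M)

namespace Aux

variable (m : MonomialOrder (Fin n))

lemma toSyn_lm (f : MvPolynomial (Fin n) K) :
    m.toSyn (lm m f) = f.support.sup fun d => m.toSyn d := by
  simp [lm]

lemma le_lm {f : MvPolynomial (Fin n) K} {ν : Fin n →₀ ℕ} (hν : ν ∈ f.support) :
    m.toSyn ν ≤ m.toSyn (lm m f) := by
  rw [toSyn_lm]; exact Finset.le_sup hν

lemma lm_mem_support {f : MvPolynomial (Fin n) K} (hf : f ≠ 0) : lm m f ∈ f.support := by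
  have h : f.support.Nonempty := support_nonempty.mpr hf
  obtain ⟨ν, hν, hmax⟩ := Finset.exists_mem_eq_sup f.support h (fun d => m.toSyn d)
  have : lm m f = ν := by rw [lm, hmax, AddEquiv.symm_apply_apply]
  rwa [this]

lemma lm_coeff_ne_zero {f : MvPolynomial (Fin n) K} (hf : f ≠ 0) :
    MvPolynomial.coeff (lm m f) f ≠ 0 :=
  mem_support_iff.mp (lm_mem_support m hf)

lemma coeff_eq_zero_of_lt {f : MvPolynomial (Fin n) K} {ν : Fin n →₀ ℕ}
    (h : m.toSyn (lm m f) < m.toSyn ν) : MvPolynomial.coeff ν f = 0 := by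
  by_contra hc
  exact absurd (le_lm m (mem_support_iff.mpr hc)) (not_le.mpr h)

lemma lm_eq_of {f : MvPolynomial (Fin n) K} {μ : Fin n →₀ ℕ}
    (h1 : MvPolynomial.coeff μ f ≠ 0)
    (h2 : ∀ ν ∈ f.support, m.toSyn ν ≤ m.toSyn μ) : lm m f = μ := by
  have hf : f ≠ 0 := fun h => h1 (by simp [h])
  apply m.toSyn.injective
  exact le_antisymm (h2 _ (lm_mem_support m hf)) (le_lm m (mem_support_iff.mpr h1))

lemma lm_lt_of {r : MvPolynomial (Fin n) K} {μ : Fin n →₀ ℕ}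
    (hr : r ≠ 0) (hc : MvPolynomial.coeff μ r = 0)
    (hb : ∀ ν ∈ r.support, m.toSyn ν ≤ m.toSyn μ) :
    m.toSyn (lm m r) < m.toSyn μ := by
  refine lt_of_le_of_ne (hb _ (lm_mem_support m hr)) (fun he => ?_)
  have : lm m r = μ := m.toSyn.injective he
  exact lm_coeff_ne_zero m hr (this ▸ hc)

lemma lm_monomial_mul {f : MvPolynomial (Fin n) K} (hf : f ≠ 0) {δ : Fin n →₀ ℕ}
    {c : K} (hc : c ≠ 0) : lm m (monomial δ c * f) = δ + lm m f := by
  classical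
  apply lm_eq_of
  · rw [coeff_monomial_mul]
    exact mul_ne_zero hc (lm_coeff_ne_zero m hf)
  · intro ν hν
    have := MvPolynomial.support_mul (monomial δ c) f hν
    rw [Finset.mem_add] at this
    obtain ⟨a, ha, b, hb, rfl⟩ := this
    have ha' : a = δ := by
      have := MvPolynomial.support_monomial_subset ha
      simpa using this
    subst ha'
    rw [map_add, map_add]
    exact add_le_add (le_refl _) (le_lm m hb)

lemma initialIdeal_eq_span_image (I : Ideal (MvPolynomial (Fin n) K)) :
    initialIdeal m I = Ideal.span ((fun μ => monomial μ (1 : K)) ''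
      {μ | ∃ f ∈ I, f ≠ 0 ∧ lm m f = μ}) := by
  unfold initialIdeal
  congr 1
  ext p
  constructor
  · rintro ⟨f, hf, hf0, rfl⟩
    exact ⟨lm m f, ⟨f, hf, hf0, rfl⟩, rfl⟩
  · rintro ⟨μ, ⟨f, hf, hf0, rfl⟩, rfl⟩
    exact ⟨f, hf, hf0, rfl⟩

lemma mem_initialIdeal_iff {I : Ideal (MvPolynomial (Fin n) K)}
    {p : MvPolynomial (Fin n) K} :
    p ∈ initialIdeal m I ↔ ∀ ν ∈ p.support, ∃ f ∈ I, f ≠ 0 ∧ lm m f ≤ ν := by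
  rw [initialIdeal_eq_span_image, mem_ideal_span_monomial_image]
  constructor
  · intro h ν hν
    obtain ⟨si, ⟨f, hf, hf0, rfl⟩, hle⟩ := h ν hν
    exact ⟨f, hf, hf0, hle⟩
  · intro h ν hν
    obtain ⟨f, hf, hf0, hle⟩ := h ν hν
    exact ⟨lm m f, ⟨f, hf, hf0, rfl⟩, hle⟩

lemma monomial_mem_initialIdeal {I : Ideal (MvPolynomial (Fin n) K)}
    {ν : Fin n →₀ ℕ} {c : K} {f : MvPolynomial (Fin n) K}
    (hf : f ∈ I) (hf0 : f ≠ 0) (hle : lm m f ≤ ν) :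
    monomial ν c ∈ initialIdeal m I := by
  rw [mem_initialIdeal_iff]
  intro xi hxi
  have : xi = ν := by simpa using MvPolynomial.support_monomial_subset hxi
  exact ⟨f, hf, hf0, this ▸ hle⟩

lemma mem_sum_initialIdeal {J E : Ideal (MvPolynomial (Fin n) K)}
    {ν : Fin n →₀ ℕ}
    (hmem : monomial ν (1 : K) ∈ initialIdeal m J + initialIdeal m E) :
    (∃ f ∈ J, f ≠ 0 ∧ lm m f ≤ ν) ∨ (∃ g ∈ E, g ≠ 0 ∧ lm m g ≤ ν) := by
  rw [initialIdeal_eq_span_image m J, initialIdeal_eq_span_image m E,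
    Ideal.add_eq_sup, ← Ideal.span_union, ← Set.image_union,
    mem_ideal_span_monomial_image] at hmem
  have hν : ν ∈ (monomial ν (1 : K)).support := by
    simp [mem_support_iff]
  obtain ⟨si, hsi, hle⟩ := hmem ν hν
  rcases hsi with ⟨f, hf, hf0, rfl⟩ | ⟨g, hg, hg0, rfl⟩
  · exact Or.inl ⟨f, hf, hf0, hle⟩
  · exact Or.inr ⟨g, hg, hg0, hle⟩

lemma exists_reducer {p f' : MvPolynomial (Fin n) K} (hp : p ≠ 0) (hf' : f' ≠ 0)
    (hle : lm m f' ≤ lm m p) :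
    ∃ q ∈ Ideal.span {f'}, q ≠ 0 ∧ lm m q = lm m p ∧
      MvPolynomial.coeff (lm m p) q = MvPolynomial.coeff (lm m p) p := by
  set c : K := MvPolynomial.coeff (lm m p) p * (MvPolynomial.coeff (lm m f') f')⁻¹ with hc
  have hc0 : c ≠ 0 :=
    mul_ne_zero (lm_coeff_ne_zero m hp) (inv_ne_zero (lm_coeff_ne_zero m hf'))
  refine ⟨monomial (lm m p - lm m f') c * f', ?_, ?_, ?_, ?_⟩
  · exact Ideal.mul_mem_left _ _ (Ideal.subset_span rfl)
  · exact mul_ne_zero (fun h => hc0 (by simpa using h)) hf'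
  · rw [lm_monomial_mul m hf' hc0, tsub_add_cancel_of_le hle]
  · have hδ : lm m p - lm m f' + lm m f' = lm m p := tsub_add_cancel_of_le hle
    have h1 : MvPolynomial.coeff (lm m p - lm m f' + lm m f')
        (monomial (lm m p - lm m f') c * f') = MvPolynomial.coeff (lm m p) p := by
      rw [coeff_monomial_mul, hc, mul_assoc,
        inv_mul_cancel₀ (lm_coeff_ne_zero m hf'), mul_one]
    rw [hδ] at h1
    exact h1

end Aux

namespace Aux

lemma key (m : MonomialOrder (Fin n)) {J E : Ideal (MvPolynomial (Fin n) K)}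
    (h : initialIdeal m (J + E) = initialIdeal m J + initialIdeal m E)
    (s : m.syn) :
    ∀ f g : MvPolynomial (Fin n) K, f ∈ J → g ∈ E → f ≠ 0 → g ≠ 0 →
      lm m f = lm m g →
      MvPolynomial.coeff (lm m f) f = MvPolynomial.coeff (lm m g) g →
      m.toSyn (lm m (f - g)) = s →
      ∃ p ∈ J ⊓ E, p ≠ 0 ∧ lm m p = lm m f := by
  classical
  refine WellFoundedLT.induction (motive := fun s => ∀ f g : MvPolynomial (Fin n) K, f ∈ J → g ∈ E → f ≠ 0 → g ≠ 0 → lm m f = lm m g → MvPolynomial.coeff (lm m f) f = MvPolynomial.coeff (lm m g) g → m.toSyn (lm m (f - g)) = s → ∃ p ∈ J ⊓ E, p ≠ 0 ∧ lm m p = lm m f) s ?_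
  intro s ih f g hfJ hgE hf0 hg0 hlm hcoef hs
  by_cases hfg : f - g = 0
  · rw [sub_eq_zero] at hfg
    exact ⟨f, ⟨hfJ, hfg ▸ hgE⟩, hf0, rfl⟩
  have hcμ : MvPolynomial.coeff (lm m f) (f - g) = 0 := by
    rw [MvPolynomial.coeff_sub, hcoef, hlm, sub_self]
  have hbound : ∀ ν ∈ (f - g).support, m.toSyn ν ≤ m.toSyn (lm m f) := by
    intro ν hν
    rcases Finset.mem_union.mp (MvPolynomial.support_sub _ f g hν) with h1 | h1
    · exact le_lm m h1
    · rw [hlm]; exact le_lm m h1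
  have hlt : m.toSyn (lm m (f - g)) < m.toSyn (lm m f) := lm_lt_of m hfg hcμ hbound
  have hmem : monomial (lm m (f - g)) (1 : K) ∈ initialIdeal m (J + E) := by
    apply Ideal.subset_span
    exact ⟨f - g, sub_mem (Ideal.mem_sup_left hfJ) (Ideal.mem_sup_right hgE), hfg, rfl⟩
  rw [h] at hmem
  rcases mem_sum_initialIdeal m hmem with ⟨f', hf'J, hf'0, hle⟩ | ⟨g', hg'E, hg'0, hle⟩
  · obtain ⟨q, hqspan, hq0, hlmq, hcq⟩ := exists_reducer m hfg hf'0 hle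
    have hqJ : q ∈ J := Ideal.span_le.mpr (Set.singleton_subset_iff.mpr hf'J) hqspan
    have hqhi : ∀ ν, m.toSyn (lm m (f - g)) < m.toSyn ν → MvPolynomial.coeff ν q = 0 := by
      intro ν hν
      exact coeff_eq_zero_of_lt m (by rw [hlmq]; exact hν)
    have hsuppq : ∀ ν ∈ q.support, m.toSyn ν ≤ m.toSyn (lm m f) := by
      intro ν hν
      exact le_of_lt (lt_of_le_of_lt (by rw [← hlmq]; exact le_lm m hν) hlt)
    have hcμ1 : MvPolynomial.coeff (lm m f) (f - q) = MvPolynomial.coeff (lm m f) f := by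
      rw [MvPolynomial.coeff_sub, hqhi _ hlt, sub_zero]
    have hf₁0 : f - q ≠ 0 := fun hz =>
      lm_coeff_ne_zero m hf0 (by rw [← hcμ1, hz, MvPolynomial.coeff_zero])
    have hlmf₁ : lm m (f - q) = lm m f := by
      apply lm_eq_of
      · rw [hcμ1]; exact lm_coeff_ne_zero m hf0
      · intro ν hν
        rcases Finset.mem_union.mp (MvPolynomial.support_sub _ f q hν) with h1 | h1
        · exact le_lm m h1
        · exact hsuppq ν h1
    have hdiff : f - q - g = (f - g) - q := by ring
    by_cases h2 : f - q - g = 0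
    · rw [sub_eq_zero] at h2
      exact ⟨f - q, ⟨sub_mem hfJ hqJ, h2 ▸ hgE⟩, hf₁0, hlmf₁⟩
    · have hlt2 : m.toSyn (lm m (f - q - g)) < s := by
        rw [← hs]
        apply lm_lt_of m h2
        · rw [hdiff, MvPolynomial.coeff_sub, hcq, sub_self]
        · intro ν hν
          rw [hdiff] at hν
          rcases Finset.mem_union.mp (MvPolynomial.support_sub _ (f - g) q hν) with h1 | h1
          · exact le_lm m h1
          · rw [← hlmq]; exact le_lm m h1
      obtain ⟨p, hp, hp0, hlmp⟩ := ih _ hlt2 (f - q) g (sub_mem hfJ hqJ) hgE hf₁0 hg0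
        (hlmf₁.trans hlm) (by rw [hlmf₁, hcμ1, hcoef]) rfl
      exact ⟨p, hp, hp0, hlmp.trans hlmf₁⟩
  · obtain ⟨q, hqspan, hq0, hlmq, hcq⟩ := exists_reducer m hfg hg'0 hle
    have hqE : q ∈ E := Ideal.span_le.mpr (Set.singleton_subset_iff.mpr hg'E) hqspan
    have hqhi : ∀ ν, m.toSyn (lm m (f - g)) < m.toSyn ν → MvPolynomial.coeff ν q = 0 := by
      intro ν hν
      exact coeff_eq_zero_of_lt m (by rw [hlmq]; exact hν)
    have hsuppq : ∀ ν ∈ q.support, m.toSyn ν ≤ m.toSyn (lm m f) := by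
      intro ν hν
      exact le_of_lt (lt_of_le_of_lt (by rw [← hlmq]; exact le_lm m hν) hlt)
    have hcμ1 : MvPolynomial.coeff (lm m f) (g + q) = MvPolynomial.coeff (lm m f) g := by
      rw [MvPolynomial.coeff_add, hqhi _ hlt, add_zero]
    have hcg : MvPolynomial.coeff (lm m f) g ≠ 0 := by
      rw [hlm]; exact lm_coeff_ne_zero m hg0
    have hg₁0 : g + q ≠ 0 := fun hz =>
      hcg (by rw [← hcμ1, hz, MvPolynomial.coeff_zero])
    have hlmg₁ : lm m (g + q) = lm m f := by
      apply lm_eq_of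
      · rw [hcμ1]; exact hcg
      · intro ν hν
        rcases Finset.mem_union.mp (MvPolynomial.support_add hν) with h1 | h1
        · rw [hlm]; exact le_lm m h1
        · exact hsuppq ν h1
    have hdiff : f - (g + q) = (f - g) - q := by ring
    by_cases h2 : f - (g + q) = 0
    · rw [sub_eq_zero] at h2
      exact ⟨f, ⟨hfJ, h2 ▸ add_mem hgE hqE⟩, hf0, rfl⟩
    · have hlt2 : m.toSyn (lm m (f - (g + q))) < s := by
        rw [← hs]
        apply lm_lt_of m h2
        · rw [hdiff, MvPolynomial.coeff_sub, hcq, sub_self]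
        · intro ν hν
          rw [hdiff] at hν
          rcases Finset.mem_union.mp (MvPolynomial.support_sub _ (f - g) q hν) with h1 | h1
          · exact le_lm m h1
          · rw [← hlmq]; exact le_lm m h1
      obtain ⟨p, hp, hp0, hlmp⟩ := ih _ hlt2 f (g + q) hfJ (add_mem hgE hqE) hf0 hg₁0
        hlmg₁.symm (by rw [hlmg₁, hcμ1, hcoef, hlm]) rfl
      exact ⟨p, hp, hp0, hlmp⟩

end Aux

/-- If `in(J+E) = in(J) + in(E)`, then `in(J ∩ E) = in(J) ∩ in(E)`. -/
theorem stmt2 (m : MonomialOrder (Fin n)) (J E : Ideal (MvPolynomial (Fin n) K))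
    (h : initialIdeal m (J + E) = initialIdeal m J + initialIdeal m E) :
    initialIdeal m (J ⊓ E) = initialIdeal m J ⊓ initialIdeal m E := by
  apply le_antisymm
  · refine Ideal.span_le.mpr ?_
    rintro p ⟨f, ⟨hfJ, hfE⟩, hf0, rfl⟩
    exact Submodule.mem_inf.mpr
      ⟨Ideal.subset_span ⟨f, hfJ, hf0, rfl⟩, Ideal.subset_span ⟨f, hfE, hf0, rfl⟩⟩
  · intro p hp
    obtain ⟨hpJ, hpE⟩ := Submodule.mem_inf.mp hp
    rw [Aux.mem_initialIdeal_iff] at hpJ hpE ⊢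
    intro ν hν
    obtain ⟨f, hfJ, hf0, hlef⟩ := hpJ ν hν
    obtain ⟨g, hgE, hg0, hleg⟩ := hpE ν hν
    set f₁ := monomial (ν - lm m f) (1 : K) * f with hf₁def
    have hf₁0 : f₁ ≠ 0 := mul_ne_zero (by simp [MvPolynomial.monomial_eq_zero]) hf0
    have hf₁J : f₁ ∈ J := Ideal.mul_mem_left _ _ hfJ
    have hlmf₁ : lm m f₁ = ν := by
      rw [hf₁def, Aux.lm_monomial_mul m hf0 one_ne_zero, tsub_add_cancel_of_le hlef]
    set g₁ := monomial (ν - lm m g) (1 : K) * g with hg₁def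
    have hg₁0 : g₁ ≠ 0 := mul_ne_zero (by simp [MvPolynomial.monomial_eq_zero]) hg0
    have hg₁E : g₁ ∈ E := Ideal.mul_mem_left _ _ hgE
    have hlmg₁ : lm m g₁ = ν := by
      rw [hg₁def, Aux.lm_monomial_mul m hg0 one_ne_zero, tsub_add_cancel_of_le hleg]
    have hcf₁ : MvPolynomial.coeff ν f₁ ≠ 0 := by
      rw [← hlmf₁]; exact Aux.lm_coeff_ne_zero m hf₁0
    have hcg₁ : MvPolynomial.coeff ν g₁ ≠ 0 := by
      rw [← hlmg₁]; exact Aux.lm_coeff_ne_zero m hg₁0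
    set c := MvPolynomial.coeff ν f₁ * (MvPolynomial.coeff ν g₁)⁻¹ with hcdef
    have hc0 : c ≠ 0 := mul_ne_zero hcf₁ (inv_ne_zero hcg₁)
    set g₂ := MvPolynomial.C c * g₁ with hg₂def
    have hg₂E : g₂ ∈ E := Ideal.mul_mem_left _ _ hg₁E
    have hg₂0 : g₂ ≠ 0 := mul_ne_zero (by simpa using hc0) hg₁0
    have hlmg₂ : lm m g₂ = ν := by
      rw [hg₂def, MvPolynomial.C_apply, Aux.lm_monomial_mul m hg₁0 hc0, zero_add, hlmg₁]
    have hcoefeq : MvPolynomial.coeff ν g₂ = MvPolynomial.coeff ν f₁ := by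
      rw [hg₂def, MvPolynomial.coeff_C_mul, hcdef, mul_assoc, inv_mul_cancel₀ hcg₁, mul_one]
    obtain ⟨p', hp', hp'0, hlmp'⟩ := Aux.key m h (m.toSyn (lm m (f₁ - g₂))) f₁ g₂
      hf₁J hg₂E hf₁0 hg₂0 (hlmf₁.trans hlmg₂.symm)
      (by rw [hlmf₁, hlmg₂, hcoefeq]) rfl
    exact ⟨p', hp', hp'0, le_of_eq (by rw [hlmp', hlmf₁])⟩
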